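/- Let (R,𝔪) be a Noetherian local ring of prime characteristic p, with 𝔪-adic completion R̂. If an ideal 𝔞 of R and a power Q of p satisfy ((𝔞R̂)^F)^[Q] = (𝔞R̂)^[Q] in R̂, then (𝔞^F)^[Q] = 𝔞^[Q] in R. -/

import Mathlib

/-- The `q`-th Frobenius power of a set `S`: the ideal generated by `q`-th powers
of elements of `S`. -/
def frobPow {R : Type*} [CommRing R] (S : Set R) (q : ℕ) : Ideal R :=
  Ideal.span ((· ^ q) '' S)

/-- The Frobenius closure of an ideal `I` in a ring of characteristic `p`. -/
def frobClosure {R : Type*} [CommRing R] (p : ℕ) (I : Ideal R) : Set R :=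
  {r | ∃ n : ℕ, r ^ p ^ n ∈ frobPow (I : Set R) (p ^ n)}

section Aux

variable {R : Type*} [CommRing R] [IsNoetherianRing R] [IsLocalRing R]

/-- Faithful flatness consequence: contraction of extension is the ideal itself. -/
lemma mem_of_map_mem (J : Ideal R) (x : R)
    (hx : algebraMap R (AdicCompletion (IsLocalRing.maximalIdeal R) R) x ∈
      J.map (algebraMap R (AdicCompletion (IsLocalRing.maximalIdeal R) R))) : x ∈ J := by
  set I := IsLocalRing.maximalIdeal R
  set f := algebraMap R (AdicCompletion I R)
  -- the induced map to the completion of R/J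
  set g := AdicCompletion.map I (J.mkQ) with hg
  have hker : J.map f ≤ (LinearMap.ker g : Submodule (AdicCompletion I R) (AdicCompletion I R)) := by
    rw [Ideal.map, Ideal.span_le]
    rintro - ⟨j, hj, rfl⟩
    have : f j = AdicCompletion.of I R j := rfl
    rw [SetLike.mem_coe]
    change g (f j) = 0
    rw [this]
    ext n
    rw [hg, AdicCompletion.map_val_apply, AdicCompletion.of_apply, AdicCompletion.val_zero]
    have h1 : (I ^ n • ⊤ : Submodule R R).mkQ j = Submodule.Quotient.mk j := rfl
    rw [h1, LinearMap.reduceModIdeal_apply]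
    have h2 : J.mkQ j = 0 := (Submodule.Quotient.mk_eq_zero J).2 hj
    rw [h2]
    simp
  have h0 : g (f x) = 0 := hker hx
  have hfx : g (f x) = AdicCompletion.of I (R ⧸ J) (Submodule.Quotient.mk x) := by
    have : f x = AdicCompletion.of I R x := rfl
    rw [this]
    ext n
    rw [hg, AdicCompletion.map_val_apply, AdicCompletion.of_apply, AdicCompletion.of_apply]
    have h1 : (I ^ n • ⊤ : Submodule R R).mkQ x = Submodule.Quotient.mk x := rfl
    rw [h1, LinearMap.reduceModIdeal_apply]
    rfl
  rw [hfx] at h0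
  -- Hausdorffness of R/J
  have hh : IsHausdorff I (R ⧸ J) := by
    constructor
    intro y hy
    have hbot := Ideal.iInf_pow_smul_eq_bot_of_isLocalRing (M := R ⧸ J) I
      (IsLocalRing.maximalIdeal.isMaximal R).ne_top
    have : y ∈ (⨅ i : ℕ, I ^ i • (⊤ : Submodule R (R ⧸ J))) := by
      rw [Submodule.mem_iInf]
      intro n
      exact SModEq.zero.1 (hy n)
    rw [hbot] at this
    exact this
  have : (Submodule.Quotient.mk x : R ⧸ J) = 0 := by
    apply hh.haus
    intro n
    rw [SModEq.zero]
    have := congrArg (fun z => z.val n) h0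
    simp only [AdicCompletion.of_apply, AdicCompletion.val_zero] at this
    exact (Submodule.Quotient.mk_eq_zero _).1 this
  rwa [Submodule.Quotient.mk_eq_zero] at this

end Aux

lemma pow_mem_frobPow {A : Type*} [CommRing A] {p : ℕ} (hp : p.Prime) [CharP A p]
    (e : ℕ) (S : Set A) {a : A} (ha : a ∈ Ideal.span S) : a ^ p ^ e ∈ frobPow S (p ^ e) := by
  haveI : Fact p.Prime := ⟨hp⟩
  refine Submodule.span_induction ?_ ?_ ?_ ?_ ha
  · exact fun x hx => Ideal.subset_span ⟨x, hx, rfl⟩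
  · rw [zero_pow (pow_ne_zero _ hp.ne_zero)]; exact zero_mem _
  · intro x y _ _ hx hy
    rw [add_pow_char_pow]
    exact add_mem hx hy
  · intro r x _ hx
    rw [smul_eq_mul, mul_pow]
    exact Ideal.mul_mem_left _ _ hx

theorem frobClosure_of_completion {R : Type*} [CommRing R] [IsNoetherianRing R]
    [IsLocalRing R] (p : ℕ) (hp : p.Prime) [CharP R p] (𝔞 : Ideal R) (e : ℕ)
    (h : frobPow (frobClosure p (𝔞.map (algebraMap R
          (AdicCompletion (IsLocalRing.maximalIdeal R) R)))) (p ^ e) =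
        frobPow ((𝔞.map (algebraMap R
          (AdicCompletion (IsLocalRing.maximalIdeal R) R)) :
            Ideal (AdicCompletion (IsLocalRing.maximalIdeal R) R)) : Set _) (p ^ e)) :
    frobPow (frobClosure p 𝔞) (p ^ e) = frobPow (𝔞 : Set R) (p ^ e) := by
  set I := IsLocalRing.maximalIdeal R
  set f := algebraMap R (AdicCompletion I R) with hf
  have hfinj : Function.Injective f := by
    intro a b hab
    have : a - b ∈ (⊥ : Ideal R) := by
      apply mem_of_map_mem
      rw [map_sub, hab, sub_self]
      exact Ideal.zero_mem _
    simpa [sub_eq_zero] using this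
  haveI : CharP (AdicCompletion I R) p := charP_of_injective_ringHom hfinj p
  apply le_antisymm
  · intro x hx
    -- push into the completion
    have step1 : f x ∈ frobPow (frobClosure p (𝔞.map f)) (p ^ e) := by
      have hmap : f x ∈ (frobPow (frobClosure p 𝔞) (p ^ e)).map f :=
        Ideal.mem_map_of_mem f hx
      rw [frobPow, Ideal.map_span] at hmap
      refine Ideal.span_le.2 ?_ hmap
      rintro - ⟨-, ⟨r, hr, rfl⟩, rfl⟩
      rw [SetLike.mem_coe, map_pow]
      refine Ideal.subset_span ⟨f r, ?_, rfl⟩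
      obtain ⟨n, hn⟩ := hr
      refine ⟨n, ?_⟩
      have : f (r ^ p ^ n) ∈ (frobPow (𝔞 : Set R) (p ^ n)).map f :=
        Ideal.mem_map_of_mem f hn
      rw [frobPow, Ideal.map_span] at this
      rw [← map_pow]
      refine Ideal.span_le.2 ?_ this
      rintro - ⟨-, ⟨a, ha, rfl⟩, rfl⟩
      rw [SetLike.mem_coe, map_pow]
      exact Ideal.subset_span ⟨f a, Ideal.mem_map_of_mem f ha, rfl⟩
    rw [h] at step1
    -- descend back
    have step2 : frobPow ((𝔞.map f : Ideal (AdicCompletion I R)) : Set _) (p ^ e) ≤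
        (frobPow (𝔞 : Set R) (p ^ e)).map f := by
      rw [frobPow, Ideal.span_le]
      rintro - ⟨z, hz, rfl⟩
      rw [SetLike.mem_coe]
      have hz' : z ∈ Ideal.span (f '' (𝔞 : Set R)) := hz
      have := pow_mem_frobPow hp e (f '' (𝔞 : Set R)) hz'
      rw [frobPow] at this
      rw [frobPow, Ideal.map_span]
      have himg : ((· ^ p ^ e) '' (f '' (𝔞 : Set R))) = f '' ((· ^ p ^ e) '' (𝔞 : Set R)) := by
        rw [Set.image_image, Set.image_image]
        simp [map_pow]
      rwa [himg] at this
    exact mem_of_map_mem _ x (step2 step1)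
  · have hsub : (𝔞 : Set R) ⊆ frobClosure p 𝔞 := fun r hr =>
      ⟨0, Ideal.subset_span ⟨r, hr, rfl⟩⟩
    exact Ideal.span_mono (Set.image_mono hsub)
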